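/- Let q = p^m be a prime power with p ≥ 7 prime. There exist constants c₁, c₂ > 0, depending only on q, such that for every integer a ≥ 1 and every finite field F with q^a elements, the number |O_q(a)| of orbits of the map (j, x) ↦ (q·j, x^q) acting on (ZMod 3)ˣ × Fˣ satisfies c₁·q^a/a ≤ |O_q(a)| ≤ c₂·q^a/a. -/

import Mathlib

lemma aux_dvd_gcd {q d : ℕ} (hq : 1 ≤ q) :
    ∀ e a : ℕ, d ∣ q ^ e - 1 → d ∣ q ^ a - 1 → d ∣ q ^ (Nat.gcd e a) - 1 := by
  intro e a
  induction e, a using Nat.gcd.induction with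
  | H0 n => intro _ h; simpa using h
  | H1 m n hm ih =>
    intro h1 h2
    rw [Nat.gcd_rec]
    refine ih ?_ h1
    have hdvd : q ^ m - 1 ∣ q ^ (m * (n / m)) - 1 := by
      simpa [one_pow, ← pow_mul] using Nat.sub_dvd_pow_sub_pow (q ^ m) 1 (n / m)
    have h3 : d ∣ q ^ (m * (n / m)) - 1 := h1.trans hdvd
    have hn : m * (n / m) + n % m = n := Nat.div_add_mod n m
    set A := q ^ (m * (n / m)) with hA
    set B := q ^ (n % m) with hB
    have hA1 : 1 ≤ A := Nat.one_le_pow _ _ (by omega)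
    have hB1 : 1 ≤ B := Nat.one_le_pow _ _ (by omega)
    have hqn : q ^ n = B * A := by rw [← hn]; rw [pow_add]; ring
    obtain ⟨A', hA'⟩ : ∃ A', A = A' + 1 := ⟨A - 1, by omega⟩
    have h3' : d ∣ A' := by simpa [hA'] using h3
    have hP : d ∣ B * A' := h3'.mul_left B
    have hq2 : q ^ n - 1 = B * A' + (B - 1) := by
      have hBA : B * (A' + 1) = B * A' + B := by ring
      rw [hqn, hA']
      omega
    rw [hq2] at h2
    exact (Nat.dvd_add_right hP).mp h2

lemma aux_sq_pow {q a : ℕ} (hq : 4 ≤ q) (ha : 1 ≤ a) : a * a * q ^ (a / 2) ≤ q ^ a := by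
  set k := a - a / 2 with hkdef
  have hk : 1 ≤ k := by omega
  have h2k : a ≤ 2 * k := by omega
  have hak : a ≤ 2 ^ k := by
    have h1 : k - 1 < 2 ^ (k - 1) := Nat.lt_two_pow_self
    have h3 : 2 * 2 ^ (k - 1) = 2 ^ k := by
      rw [← pow_succ']; congr 1; omega
    omega
  have hka : k + a / 2 = a := by omega
  calc a * a * q ^ (a / 2) ≤ (2 ^ k * 2 ^ k) * q ^ (a / 2) :=
        Nat.mul_le_mul (Nat.mul_le_mul hak hak) le_rfl
    _ = 4 ^ k * q ^ (a / 2) := by rw [← mul_pow]; norm_num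
    _ ≤ q ^ k * q ^ (a / 2) := Nat.mul_le_mul (Nat.pow_le_pow_left hq k) le_rfl
    _ = q ^ a := by rw [← pow_add, hka]



/-- The orbit of `(j, x)` under the map `(j, x) ↦ (q·j, x^q)` on `(ZMod 3)ˣ × Fˣ`
(where `q·j` is multiplication by `q mod 3`). -/
def twistedOrbit (q : ℕ) {F : Type*} [Field F] (w : (ZMod 3)ˣ × Fˣ) :
    Set ((ZMod 3)ˣ × Fˣ) :=
  {z : (ZMod 3)ˣ × Fˣ | ∃ n : ℕ,
    (z.1 : ZMod 3) = (q : ZMod 3) ^ n * (w.1 : ZMod 3) ∧ z.2 = w.2 ^ q ^ n}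

/-- The set of orbits of `(j, x) ↦ (q·j, x^q)` acting on `(ZMod 3)ˣ × Fˣ`. -/
def twistedOrbits (q : ℕ) (F : Type*) [Field F] : Set (Set ((ZMod 3)ˣ × Fˣ)) :=
  {S | ∃ w : (ZMod 3)ˣ × Fˣ, S = twistedOrbit q w}

/-- The number `|O_q(a)|` of orbits of `(j, x) ↦ (q·j, x^q)` on `(ZMod 3)ˣ × Fˣ`, for `F`
a field with `q^a` elements, is bounded above and below by constant multiples of
`q^a / a`, with constants depending only on `q`. -/
theorem stmt_14 (p m q : ℕ) (hp : p.Prime) (hp7 : 7 ≤ p) (hm : 1 ≤ m) (hq : q = p ^ m) :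
    ∃ c₁ c₂ : ℝ, 0 < c₁ ∧ 0 < c₂ ∧
      ∀ (a : ℕ), 1 ≤ a →
      ∀ (F : Type) [Field F] [Fintype F], Fintype.card F = q ^ a →
        c₁ * (q : ℝ) ^ a / a ≤ ((twistedOrbits q F).ncard : ℝ) ∧
        ((twistedOrbits q F).ncard : ℝ) ≤ c₂ * (q : ℝ) ^ a / a := by
  refine ⟨1/2, 3, by norm_num, by norm_num, ?_⟩
  intro a ha F _ _ hF
  classical
  haveI : Fact (Nat.Prime 3) := ⟨by norm_num⟩
  have hq7 : 7 ≤ q := by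
    rw [hq]
    calc 7 ≤ p := hp7
    _ ≤ p ^ m := Nat.le_self_pow (by omega) p
  have hqa2 : 2 ≤ q ^ a := by
    have h1 : q ≤ q ^ a := Nat.le_self_pow (by omega) q
    omega
  -- q is a unit mod 3
  have hu : IsUnit (q : ZMod 3) := by
    rw [isUnit_iff_ne_zero, Ne, ZMod.natCast_eq_zero_iff]
    intro h3
    rw [hq] at h3
    have h3p : 3 ∣ p := (Nat.Prime.dvd_of_dvd_pow (by norm_num) h3)
    have := (Nat.prime_dvd_prime_iff_eq (by norm_num) hp).mp h3p
    omega
  set u : (ZMod 3)ˣ := hu.unit with hudef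
  have huval : (u : ZMod 3) = (q : ZMod 3) := hu.unit_spec
  set φ : (ZMod 3)ˣ × Fˣ → (ZMod 3)ˣ × Fˣ := fun z => (u * z.1, z.2 ^ q) with hphidef
  -- iterates of φ
  have hiter : ∀ (n : ℕ) (w : (ZMod 3)ˣ × Fˣ), φ^[n] w = (u ^ n * w.1, w.2 ^ q ^ n) := by
    intro n w
    induction n with
    | zero => simp
    | succ n ih =>
      rw [Function.iterate_succ_apply', ih]
      refine Prod.ext ?_ ?_
      · show u * (u ^ n * w.1) = u ^ (n + 1) * w.1
        rw [pow_succ']; rw [mul_assoc]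
      · show (w.2 ^ q ^ n) ^ q = w.2 ^ q ^ (n + 1)
        rw [← pow_mul, ← pow_succ]
  -- membership in orbit
  have hmem : ∀ z w : (ZMod 3)ˣ × Fˣ, z ∈ twistedOrbit q w ↔ ∃ n : ℕ, z = φ^[n] w := by
    intro z w
    constructor
    · rintro ⟨n, h1, h2⟩
      exact ⟨n, by
        rw [hiter]
        refine Prod.ext ?_ h2
        show z.1 = u ^ n * w.1
        rw [Units.ext_iff]
        push_cast
        rw [huval]
        exact h1⟩
    · rintro ⟨n, rfl⟩
      refine ⟨n, ?_, ?_⟩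
      · rw [hiter]
        show ((u ^ n * w.1 : (ZMod 3)ˣ) : ZMod 3) = _
        push_cast
        rw [huval]
      · rw [hiter]
  -- x ^ q^a = x
  have hcardFx : Fintype.card Fˣ = q ^ a - 1 := by
    rw [Fintype.card_units, hF]
  have hxqa : ∀ x : Fˣ, x ^ q ^ a = x := by
    intro x
    have h1 : x ^ (q ^ a - 1) = 1 := by
      rw [← hcardFx]; exact pow_card_eq_one
    calc x ^ q ^ a = x ^ (q ^ a - 1 + 1) := by congr 1; omega
      _ = x := by rw [pow_succ, h1, one_mul]
  have hxq1 : ∀ x : Fˣ, x ^ (q ^ a - 1) = 1 := by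
    intro x; rw [← hcardFx]; exact pow_card_eq_one
  -- u^2 = 1
  have hcu : Fintype.card (ZMod 3)ˣ = 2 := by
    rw [ZMod.card_units_eq_totient]; rfl
  have hu2 : u ^ 2 = 1 := by rw [← hcu]; exact pow_card_eq_one
  -- periodicity
  have hperiod : ∀ w : (ZMod 3)ˣ × Fˣ, φ^[2 * a] w = w := by
    intro w
    rw [hiter]
    have h1 : u ^ (2 * a) = 1 := by rw [pow_mul, hu2, one_pow]
    have h2 : w.2 ^ q ^ (2 * a) = w.2 := by
      rw [two_mul, pow_add, pow_mul, hxqa, hxqa]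
    rw [h1, h2, one_mul]
  have hperiodn : ∀ (n : ℕ) (w : (ZMod 3)ˣ × Fˣ), φ^[2 * a * n] w = w := by
    intro n w
    rw [Function.iterate_mul]
    exact Function.iterate_fixed (hperiod w) n
  -- symmetry and transitivity
  have hsymm : ∀ z w : (ZMod 3)ˣ × Fˣ, z ∈ twistedOrbit q w → w ∈ twistedOrbit q z := by
    intro z w hz
    rw [hmem] at hz ⊢
    obtain ⟨n, rfl⟩ := hz
    refine ⟨(2 * a - 1) * n, ?_⟩
    rw [← Function.iterate_add_apply]
    have : (2 * a - 1) * n + n = 2 * a * n := by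
      have : 2 * a - 1 + 1 = 2 * a := by omega
      nlinarith [this]
    rw [this, hperiodn]
  have htrans : ∀ v z w : (ZMod 3)ˣ × Fˣ, v ∈ twistedOrbit q z → z ∈ twistedOrbit q w →
      v ∈ twistedOrbit q w := by
    intro v z w h1 h2
    rw [hmem] at h1 h2 ⊢
    obtain ⟨k, rfl⟩ := h1
    obtain ⟨n, rfl⟩ := h2
    exact ⟨k + n, (Function.iterate_add_apply φ k n w).symm⟩
  have heq : ∀ z w : (ZMod 3)ˣ × Fˣ, z ∈ twistedOrbit q w → twistedOrbit q z = twistedOrbit q w := by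
    intro z w h
    ext v
    exact ⟨fun hv => htrans v z w hv h, fun hv => htrans v w z hv (hsymm z w h)⟩
  -- orbit finsets
  set obFin : (ZMod 3)ˣ × Fˣ → Finset ((ZMod 3)ˣ × Fˣ) := fun w => Finset.univ.filter (· ∈ twistedOrbit q w) with hobdef
  have hmemob : ∀ z w : (ZMod 3)ˣ × Fˣ, z ∈ obFin w ↔ z ∈ twistedOrbit q w := by
    intro z w; simp [hobdef]
  have hself : ∀ w : (ZMod 3)ˣ × Fˣ, w ∈ obFin w := by
    intro w
    rw [hmemob, hmem]
    exact ⟨0, rfl⟩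
  have hobeq : ∀ z w : (ZMod 3)ˣ × Fˣ, z ∈ twistedOrbit q w → obFin z = obFin w := by
    intro z w h
    ext v
    rw [hmemob, hmemob, heq z w h]
  -- orbit size upper bound
  have hcard_le : ∀ w : (ZMod 3)ˣ × Fˣ, (obFin w).card ≤ 2 * a := by
    intro w
    have hsub : obFin w ⊆ (Finset.range (2 * a)).image (fun n => φ^[n] w) := by
      intro z hz
      rw [hmemob, hmem] at hz
      obtain ⟨n, rfl⟩ := hz
      rw [Finset.mem_image]
      refine ⟨n % (2 * a), Finset.mem_range.mpr (Nat.mod_lt _ (by omega)), ?_⟩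
      conv_rhs => rw [← Nat.mod_add_div n (2 * a)]
      rw [Function.iterate_add_apply, hperiodn]
    calc (obFin w).card ≤ _ := Finset.card_le_card hsub
      _ ≤ (Finset.range (2 * a)).card := Finset.card_image_le
      _ = 2 * a := Finset.card_range _
  -- generic elements
  set Gen : (ZMod 3)ˣ × Fˣ → Prop := fun w => ∀ e, 1 ≤ e → e < a → w.2 ^ q ^ e ≠ w.2 with hGendef
  have hgen_card : ∀ w : (ZMod 3)ˣ × Fˣ, Gen w → a ≤ (obFin w).card := by
    intro w hw
    have hsub : (Finset.range a).image (fun n => φ^[n] w) ⊆ obFin w := by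
      intro z hz
      rw [Finset.mem_image] at hz
      obtain ⟨n, _, rfl⟩ := hz
      rw [hmemob, hmem]
      exact ⟨n, rfl⟩
    have hkey : ∀ n n', n < a → n' < a → n ≤ n' → φ^[n] w = φ^[n'] w → n = n' := by
      intro n n' hn hn' hle h
      by_contra hne
      have hlt : n < n' := by omega
      have h2 : w.2 ^ q ^ n = w.2 ^ q ^ n' := by
        have := congrArg Prod.snd h
        rwa [hiter, hiter] at this
      set e := a - n' + n with hedef
      have he1 : 1 ≤ e := by omega
      have he2 : e < a := by omega
      have h3 : w.2 ^ q ^ e = w.2 := by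
        have : w.2 ^ q ^ e = (w.2 ^ q ^ n) ^ q ^ (a - n') := by
          rw [← pow_mul, ← pow_add]
          congr 2
          omega
        rw [this, h2, ← pow_mul, ← pow_add]
        have : n' + (a - n') = a := by omega
        rw [this, hxqa]
      exact hw e he1 he2 h3
    have hinj : Set.InjOn (fun n => φ^[n] w) (Finset.range a) := by
      intro n hn n' hn' h
      simp only [Finset.coe_range, Set.mem_Iio] at hn hn'
      rcases le_total n n' with hle | hle
      · exact hkey n n' hn hn' hle h
      · exact (hkey n' n hn' hn hle h.symm).symm
    calc a = (Finset.range a).card := (Finset.card_range a).symm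
      _ = ((Finset.range a).image (fun n => φ^[n] w)).card :=
        (Finset.card_image_of_injOn hinj).symm
      _ ≤ (obFin w).card := Finset.card_le_card hsub
  -- nongeneric elements satisfy a small-order condition
  have hnongen : ∀ w : (ZMod 3)ˣ × Fˣ, ¬ Gen w → ∃ g, 1 ≤ g ∧ g ≤ a / 2 ∧ w.2 ^ (q ^ g - 1) = 1 := by
    intro w hw
    have hw' : ∃ e, 1 ≤ e ∧ e < a ∧ w.2 ^ q ^ e = w.2 := by
      by_contra hc
      push_neg at hc
      exact hw (fun e h1 h2 => hc e h1 h2)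
    obtain ⟨e, he1, he2, he3⟩ := hw'
    have hd1 : orderOf w.2 ∣ q ^ e - 1 := by
      apply orderOf_dvd_of_pow_eq_one
      have h1 : w.2 ^ (q ^ e - 1) * w.2 = w.2 ^ q ^ e := by
        rw [← pow_succ]
        congr 1
        have : 1 ≤ q ^ e := Nat.one_le_pow _ _ (by omega)
        omega
      have h2 : w.2 ^ (q ^ e - 1) * w.2 = 1 * w.2 := by rw [h1, he3, one_mul]
      exact mul_right_cancel h2
    have hd2 : orderOf w.2 ∣ q ^ a - 1 := orderOf_dvd_of_pow_eq_one (hxq1 w.2)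
    have hd3 : orderOf w.2 ∣ q ^ (Nat.gcd e a) - 1 := aux_dvd_gcd (by omega) e a hd1 hd2
    set g := Nat.gcd e a with hgdef
    have hg1 : 1 ≤ g := Nat.gcd_pos_of_pos_left a (by omega)
    have hgd : g ∣ a := Nat.gcd_dvd_right e a
    have hg2 : g ≤ a / 2 := by
      obtain ⟨c, hc⟩ := hgd
      have hgle : g ≤ e := Nat.le_of_dvd (by omega) (Nat.gcd_dvd_left e a)
      have hc2 : 2 ≤ c := by
        rcases Nat.lt_or_ge c 2 with h | h
        · interval_cases c <;> omega
        · exact h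
      have : 2 * g ≤ a := by
        calc 2 * g = g * 2 := by ring
        _ ≤ g * c := Nat.mul_le_mul_left g hc2
        _ = a := hc.symm
      omega
    exact ⟨g, hg1, hg2, orderOf_dvd_iff_pow_eq_one.mp hd3⟩
  -- the containment finsets for nongeneric orbits
  set Bx : Finset Fˣ :=
    (Finset.Icc 1 (a / 2)).biUnion
      (fun g => Finset.univ.filter (fun x : Fˣ => x ^ (q ^ g - 1) = 1)) with hBxdef
  have hBxcard : Bx.card ≤ a / 2 * q ^ (a / 2) := by
    calc Bx.card ≤ ∑ g ∈ Finset.Icc 1 (a / 2),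
          (Finset.univ.filter (fun x : Fˣ => x ^ (q ^ g - 1) = 1)).card :=
        Finset.card_biUnion_le
      _ ≤ ∑ _g ∈ Finset.Icc 1 (a / 2), q ^ (a / 2) := by
        apply Finset.sum_le_sum
        intro g hg
        rw [Finset.mem_Icc] at hg
        have hn : 0 < q ^ g - 1 := by
          have : q ≤ q ^ g := Nat.le_self_pow (by omega) q
          omega
        have h1 := card_nthRoots_subgroup_units (Units.coeHom F) Units.coeHom_injective hn 1
        have h2 := Polynomial.card_nthRoots (q ^ g - 1) ((Units.coeHom F) 1)
        have h3 : q ^ g - 1 ≤ q ^ (a / 2) := by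
          have : q ^ g ≤ q ^ (a / 2) := Nat.pow_le_pow_right (by omega) hg.2
          omega
        calc (Finset.univ.filter (fun x : Fˣ => x ^ (q ^ g - 1) = 1)).card
            ≤ Multiset.card (Polynomial.nthRoots (q ^ g - 1) ((Units.coeHom F) 1)) := by
              exact h1
          _ ≤ q ^ g - 1 := h2
          _ ≤ q ^ (a / 2) := h3
      _ = (Finset.Icc 1 (a / 2)).card * q ^ (a / 2) := by
        rw [Finset.sum_const]
        try rw [smul_eq_mul]
      _ = a / 2 * q ^ (a / 2) := by
        have he : a / 2 + 1 - 1 = a / 2 := by omega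
        rw [Nat.card_Icc, he]
  set B : Finset ((ZMod 3)ˣ × Fˣ) := Finset.univ ×ˢ Bx with hBdef
  have hBcard : B.card ≤ a * q ^ (a / 2) := by
    rw [hBdef, Finset.card_product, Finset.card_univ, hcu]
    calc 2 * Bx.card ≤ 2 * (a / 2 * q ^ (a / 2)) := by omega
      _ = 2 * (a / 2) * q ^ (a / 2) := by ring
      _ ≤ a * q ^ (a / 2) := Nat.mul_le_mul_right _ (by omega)
  -- the finset of orbits
  set 𝒪 : Finset (Finset ((ZMod 3)ˣ × Fˣ)) := Finset.image obFin Finset.univ with hOdef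
  have hdisj : ∀ s ∈ 𝒪, ∀ t ∈ 𝒪, s ≠ t → Disjoint s t := by
    intro s hs t ht hst
    rw [hOdef, Finset.mem_image] at hs ht
    obtain ⟨w, _, rfl⟩ := hs
    obtain ⟨z, _, rfl⟩ := ht
    rw [Finset.disjoint_left]
    intro v hv hv'
    rw [hmemob] at hv hv'
    exact hst ((hobeq v w hv).symm.trans (hobeq v z hv'))
  -- lower bound
  have hcardG : Fintype.card ((ZMod 3)ˣ × Fˣ) = 2 * (q ^ a - 1) := by
    rw [Fintype.card_prod, hcu, hcardFx]
  have hlow : q ^ a ≤ 𝒪.card * (2 * a) := by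
    have hcover : (Finset.univ : Finset ((ZMod 3)ˣ × Fˣ)) ⊆ 𝒪.biUnion id := by
      intro w _
      rw [Finset.mem_biUnion]
      exact ⟨obFin w, Finset.mem_image.mpr ⟨w, Finset.mem_univ w, rfl⟩, hself w⟩
    have h1 : Fintype.card ((ZMod 3)ˣ × Fˣ) ≤ 𝒪.card * (2 * a) := by
      calc Fintype.card ((ZMod 3)ˣ × Fˣ) = (Finset.univ : Finset ((ZMod 3)ˣ × Fˣ)).card := (Finset.card_univ).symm
        _ ≤ (𝒪.biUnion id).card := Finset.card_le_card hcover
        _ ≤ ∑ s ∈ 𝒪, (id s).card := Finset.card_biUnion_le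
        _ ≤ 𝒪.card • (2 * a) := Finset.sum_le_card_nsmul _ _ _ (fun s hs => by
            rw [hOdef, Finset.mem_image] at hs
            obtain ⟨w, _, rfl⟩ := hs
            exact hcard_le w)
        _ = 𝒪.card * (2 * a) := by rw [smul_eq_mul]
    rw [hcardG] at h1
    omega
  -- upper bound
  set 𝒪gen := 𝒪.filter (fun s => ∃ v ∈ s, Gen v) with hOgendef
  set 𝒪non := 𝒪.filter (fun s => ¬ ∃ v ∈ s, Gen v) with hOnondef
  have hsplit : 𝒪gen.card + 𝒪non.card = 𝒪.card :=
    Finset.card_filter_add_card_filter_not _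
  have hgen_bound : 𝒪gen.card * a ≤ 2 * q ^ a := by
    have h1 : 𝒪gen.card * a = ∑ _s ∈ 𝒪gen, a := by
      rw [Finset.sum_const, smul_eq_mul]
    have h2 : ∀ s ∈ 𝒪gen, a ≤ s.card := by
      intro s hs
      rw [hOgendef, Finset.mem_filter] at hs
      obtain ⟨hs1, v, hv, hgenv⟩ := hs
      rw [hOdef, Finset.mem_image] at hs1
      obtain ⟨w, _, rfl⟩ := hs1
      rw [hmemob] at hv
      rw [← hobeq v w hv]
      exact hgen_card v hgenv
    have hd : ∀ s ∈ 𝒪gen, ∀ t ∈ 𝒪gen, s ≠ t → Disjoint (id s) (id t) := by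
      intro s hs t ht
      exact hdisj s (Finset.mem_of_mem_filter s hs) t (Finset.mem_of_mem_filter t ht)
    calc 𝒪gen.card * a = ∑ _s ∈ 𝒪gen, a := h1
      _ ≤ ∑ s ∈ 𝒪gen, s.card := Finset.sum_le_sum h2
      _ = (𝒪gen.biUnion id).card := (Finset.card_biUnion hd).symm
      _ ≤ (Finset.univ : Finset ((ZMod 3)ˣ × Fˣ)).card := Finset.card_le_card (Finset.subset_univ _)
      _ = Fintype.card ((ZMod 3)ˣ × Fˣ) := Finset.card_univ
      _ = 2 * (q ^ a - 1) := hcardG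
      _ ≤ 2 * q ^ a := by omega
  have hnon_bound : 𝒪non.card ≤ a * q ^ (a / 2) := by
    have hsubB : ∀ s ∈ 𝒪non, s ⊆ B := by
      intro s hs
      rw [hOnondef, Finset.mem_filter] at hs
      obtain ⟨hs1, hs2⟩ := hs
      rw [hOdef, Finset.mem_image] at hs1
      obtain ⟨w, _, rfl⟩ := hs1
      push_neg at hs2
      have hwnon : ¬ Gen w := hs2 w (hself w)
      obtain ⟨g, hg1, hg2, hg3⟩ := hnongen w hwnon
      intro v hv
      rw [hmemob, hmem] at hv
      obtain ⟨n, rfl⟩ := hv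
      rw [hBdef, Finset.mem_product]
      refine ⟨Finset.mem_univ _, ?_⟩
      rw [hBxdef, Finset.mem_biUnion]
      refine ⟨g, Finset.mem_Icc.mpr ⟨hg1, hg2⟩, ?_⟩
      rw [Finset.mem_filter]
      refine ⟨Finset.mem_univ _, ?_⟩
      show (φ^[n] w).2 ^ (q ^ g - 1) = 1
      rw [hiter]
      show (w.2 ^ q ^ n) ^ (q ^ g - 1) = 1
      rw [← pow_mul, mul_comm, pow_mul, hg3, one_pow]
    have hne : ∀ s ∈ 𝒪non, 1 ≤ s.card := by
      intro s hs
      rw [hOnondef, Finset.mem_filter] at hs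
      obtain ⟨hs1, _⟩ := hs
      rw [hOdef, Finset.mem_image] at hs1
      obtain ⟨w, _, rfl⟩ := hs1
      exact Finset.card_pos.mpr ⟨w, hself w⟩
    have hd : ∀ s ∈ 𝒪non, ∀ t ∈ 𝒪non, s ≠ t → Disjoint (id s) (id t) := by
      intro s hs t ht
      exact hdisj s (Finset.mem_of_mem_filter s hs) t (Finset.mem_of_mem_filter t ht)
    calc 𝒪non.card = ∑ _s ∈ 𝒪non, 1 := by rw [Finset.sum_const, smul_eq_mul, mul_one]
      _ ≤ ∑ s ∈ 𝒪non, s.card := Finset.sum_le_sum hne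
      _ = (𝒪non.biUnion id).card := (Finset.card_biUnion hd).symm
      _ ≤ B.card := Finset.card_le_card (by
          intro v hv
          rw [Finset.mem_biUnion] at hv
          obtain ⟨s, hs, hvs⟩ := hv
          exact hsubB s hs hvs)
      _ ≤ a * q ^ (a / 2) := hBcard
  have hhigh : 𝒪.card * a ≤ 3 * q ^ a := by
    have h1 : 𝒪.card * a = 𝒪gen.card * a + 𝒪non.card * a := by
      rw [← hsplit]; ring
    have h2 : 𝒪non.card * a ≤ q ^ a := by
      calc 𝒪non.card * a ≤ (a * q ^ (a / 2)) * a := Nat.mul_le_mul_right a hnon_bound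
        _ = a * a * q ^ (a / 2) := by ring
        _ ≤ q ^ a := aux_sq_pow (by omega) ha
    omega
  -- identify the orbit count
  have hN : (twistedOrbits q F).ncard = 𝒪.card := by
    have hcoe : ∀ w : (ZMod 3)ˣ × Fˣ, (↑(obFin w) : Set ((ZMod 3)ˣ × Fˣ)) = twistedOrbit q w := by
      intro w
      ext v
      simp [hmemob]
    have hset : twistedOrbits q F = (fun s : Finset ((ZMod 3)ˣ × Fˣ) => (↑s : Set ((ZMod 3)ˣ × Fˣ))) '' ↑𝒪 := by
      ext S
      constructor
      · rintro ⟨w, rfl⟩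
        exact ⟨obFin w, Finset.mem_coe.mpr (Finset.mem_image.mpr ⟨w, Finset.mem_univ w, rfl⟩),
          hcoe w⟩
      · rintro ⟨s, hs, rfl⟩
        rw [Finset.mem_coe, hOdef, Finset.mem_image] at hs
        obtain ⟨w, _, rfl⟩ := hs
        exact ⟨w, by simpa using (hcoe w)⟩
    rw [hset, Set.ncard_image_of_injective _ Finset.coe_injective, Set.ncard_coe_finset]
  -- final real-number computation
  rw [hN]
  have hA : (0 : ℝ) < (a : ℝ) := by exact_mod_cast (by omega : 0 < a)
  have hlowR : (q : ℝ) ^ a ≤ (𝒪.card : ℝ) * (2 * a) := by exact_mod_cast hlow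
  have hhighR : (𝒪.card : ℝ) * a ≤ 3 * (q : ℝ) ^ a := by exact_mod_cast hhigh
  have hkey : (𝒪.card : ℝ) * (2 * (a : ℝ)) = 2 * ((𝒪.card : ℝ) * (a : ℝ)) := by ring
  constructor
  · rw [div_le_iff₀ hA]
    linarith
  · rw [le_div_iff₀ hA]
    linarith
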